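/- Define T : ℕ → ℕ → ℕ by T(0,0)=1, T(n,0)=1, T(n,n)=[n even], and T(n,k)=T(n−1,k)+T(n−1,k−1) for n>k>0 (T(n,k)=0 if k>n). Then for all n and all 0 ≤ k ≤ n, T(n,k) = sum over b from max(0, ⌈k − n/2⌉) to ⌊k/2⌋ of binom(n−k+b, k−b)·binom(k−b, b) (the sum being 0 if the lower limit exceeds the upper limit). -/

import Mathlib

def T : ℕ → ℕ → ℕ
  | _, 0 => 1
  | 0, _ + 1 => 0
  | n + 1, k + 1 =>
    if n + 1 < k + 1 then 0
    else if k + 1 = n + 1 then (if (n + 1) % 2 = 0 then 1 else 0)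
    else T n (k + 1) + T n k

def g (a m : ℕ) : ℕ := ∑ b ∈ Finset.range (m + 1), (a + b).choose (m - b) * (m - b).choose b

lemma Hlem (a m : ℕ) :
    ∑ b ∈ Finset.range (m + 1), (a + b).choose (m - b) * (m + 1 - b).choose b
      = ∑ b ∈ Finset.range (m + 1), (a + 1 + b).choose (m - b) * (m - b).choose b := by
  induction m with
  | zero => simp
  | succ m ih =>
    -- LHS transformation
    have hL : ∑ b ∈ Finset.range (m + 2), (a + b).choose (m + 1 - b) * (m + 2 - b).choose b
        = (∑ b ∈ Finset.range (m + 1), (a + 1 + b).choose (m - b) * (m - b).choose b)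
          + (∑ b ∈ Finset.range (m + 1), (a + 1 + b).choose (m - b) * (m - b).choose (b + 1))
          + a.choose (m + 1) := by
      rw [Finset.sum_range_succ' (fun b => (a + b).choose (m + 1 - b) * (m + 2 - b).choose b)]
      have h1 : ∀ b ∈ Finset.range (m + 1),
          (a + (b + 1)).choose (m + 1 - (b + 1)) * (m + 2 - (b + 1)).choose (b + 1)
            = (a + 1 + b).choose (m - b) * (m - b).choose b
              + (a + 1 + b).choose (m - b) * (m - b).choose (b + 1) := by
        intro b hb
        have hb' : b ≤ m := by simpa [Nat.lt_succ_iff] using hb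
        have e1 : a + (b + 1) = a + 1 + b := by omega
        have e2 : m + 1 - (b + 1) = m - b := by omega
        have e3 : m + 2 - (b + 1) = (m - b) + 1 := by omega
        rw [e1, e2, e3, Nat.choose_succ_succ, mul_add]
      rw [Finset.sum_congr rfl h1, Finset.sum_add_distrib]
      simp
    -- RHS transformation
    have hR : ∑ b ∈ Finset.range (m + 2), (a + 1 + b).choose (m + 1 - b) * (m + 1 - b).choose b
        = (∑ b ∈ Finset.range (m + 1), (a + b).choose (m - b) * (m + 1 - b).choose b)
          + (∑ b ∈ Finset.range (m + 1), (a + b).choose (m + 1 - b) * (m + 1 - b).choose b) := by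
      rw [Finset.sum_range_succ]
      have hz : (a + 1 + (m + 1)).choose (m + 1 - (m + 1)) * (m + 1 - (m + 1)).choose (m + 1)
          = 0 := by simp
      rw [hz, add_zero]
      have h1 : ∀ b ∈ Finset.range (m + 1),
          (a + 1 + b).choose (m + 1 - b) * (m + 1 - b).choose b
            = (a + b).choose (m - b) * (m + 1 - b).choose b
              + (a + b).choose (m + 1 - b) * (m + 1 - b).choose b := by
        intro b hb
        have hb' : b ≤ m := by simpa [Nat.lt_succ_iff] using hb
        have e1 : a + 1 + b = (a + b) + 1 := by omega
        have e2 : m + 1 - b = (m - b) + 1 := by omega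
        rw [e1, e2, Nat.choose_succ_succ, add_mul, Nat.succ_eq_add_one, ← e2]
      rw [Finset.sum_congr rfl h1, Finset.sum_add_distrib]
    -- the residual sums are equal
    have hres : ∑ b ∈ Finset.range (m + 1), (a + b).choose (m + 1 - b) * (m + 1 - b).choose b
        = (∑ b ∈ Finset.range (m + 1), (a + 1 + b).choose (m - b) * (m - b).choose (b + 1))
          + a.choose (m + 1) := by
      rw [Finset.sum_range_succ' (fun b => (a + b).choose (m + 1 - b) * (m + 1 - b).choose b)]
      have h1 : ∀ b ∈ Finset.range m,
          (a + (b + 1)).choose (m + 1 - (b + 1)) * (m + 1 - (b + 1)).choose (b + 1)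
            = (a + 1 + b).choose (m - b) * (m - b).choose (b + 1) := by
        intro b hb
        have hb' : b < m := by simpa using hb
        have e1 : a + (b + 1) = a + 1 + b := by omega
        have e2 : m + 1 - (b + 1) = m - b := by omega
        rw [e1, e2]
      rw [Finset.sum_congr rfl h1]
      have h2 : ∑ b ∈ Finset.range (m + 1), (a + 1 + b).choose (m - b) * (m - b).choose (b + 1)
          = ∑ b ∈ Finset.range m, (a + 1 + b).choose (m - b) * (m - b).choose (b + 1) := by
        rw [Finset.sum_range_succ]
        simp
      rw [h2]
      simp
    rw [hL, hR, hres, ih]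
    ring

lemma g_rec (a m : ℕ) : g (a + 1) (m + 1) = g a (m + 1) + g (a + 1) m := by
  unfold g
  have hz : (a + (m + 1)).choose (m + 1 - (m + 1)) * (m + 1 - (m + 1)).choose (m + 1) = 0 := by
    simp
  rw [Finset.sum_range_succ (fun b => (a + b).choose (m + 1 - b) * (m + 1 - b).choose b), hz,
    add_zero]
  rw [Finset.sum_range_succ (fun b => (a + 1 + b).choose (m + 1 - b) * (m + 1 - b).choose b)]
  have hz2 : (a + 1 + (m + 1)).choose (m + 1 - (m + 1)) * (m + 1 - (m + 1)).choose (m + 1)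
      = 0 := by simp
  rw [hz2, add_zero]
  have h1 : ∀ b ∈ Finset.range (m + 1),
      (a + 1 + b).choose (m + 1 - b) * (m + 1 - b).choose b
        = (a + b).choose (m - b) * (m + 1 - b).choose b
          + (a + b).choose (m + 1 - b) * (m + 1 - b).choose b := by
    intro b hb
    have hb' : b ≤ m := by simpa [Nat.lt_succ_iff] using hb
    have e1 : a + 1 + b = (a + b) + 1 := by omega
    have e2 : m + 1 - b = (m - b) + 1 := by omega
    rw [e1, e2, Nat.choose_succ_succ, add_mul, Nat.succ_eq_add_one, ← e2]
  rw [Finset.sum_congr rfl h1, Finset.sum_add_distrib, Hlem]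
  ring

lemma g_zero (a : ℕ) : g a 0 = 1 := by simp [g]

lemma g_diag (m : ℕ) : g 0 m = if m % 2 = 0 then 1 else 0 := by
  unfold g
  have h1 : ∀ b ∈ Finset.range (m + 1),
      (0 + b).choose (m - b) * (m - b).choose b = if 2 * b = m then 1 else 0 := by
    intro b hb
    have hb' : b ≤ m := by simpa [Nat.lt_succ_iff] using hb
    rcases lt_trichotomy (2 * b) m with h | h | h
    · have : b < m - b := by omega
      rw [Nat.choose_eq_zero_of_lt (by omega : 0 + b < m - b)]
      simp [Nat.ne_of_lt h]
    · have : m - b = b := by omega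
      simp [this, h]
    · rw [Nat.choose_eq_zero_of_lt (by omega : m - b < b)]
      simp [Nat.ne_of_gt h]
  rw [Finset.sum_congr rfl h1]
  rcases Nat.even_or_odd m with ⟨c, hc⟩ | ⟨c, hc⟩
  · have h2 : ∀ b ∈ Finset.range (m + 1),
        (if 2 * b = m then (1 : ℕ) else 0) = if b = c then 1 else 0 := by
      intro b _
      split_ifs with h h' h' <;> omega
    rw [Finset.sum_congr rfl h2, Finset.sum_ite_eq' (Finset.range (m + 1)) c fun _ => (1 : ℕ)]
    have hcm : c ∈ Finset.range (m + 1) := by simp; omega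
    have hm0 : m % 2 = 0 := by omega
    simp [hcm, hm0]
  · have h2 : ∀ b ∈ Finset.range (m + 1), (if 2 * b = m then (1 : ℕ) else 0) = 0 := by
      intro b _
      split_ifs with h <;> omega
    rw [Finset.sum_congr rfl h2]
    have hm1 : m % 2 = 1 := by omega
    simp [hm1]

lemma T_eq_g : ∀ n k, k ≤ n → T n k = g (n - k) k := by
  intro n
  induction n with
  | zero =>
    intro k hk
    interval_cases k
    simp [T, g_zero]
  | succ n ih =>
    intro k hk
    match k with
    | 0 => simp [T, g_zero]
    | k + 1 =>
      by_cases hd : k + 1 = n + 1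
      · have hnk : n = k := by omega
        subst hnk
        rw [show T (n + 1) (n + 1) = if (n + 1) % 2 = 0 then 1 else 0 by
          simp [T]]
        simp only [Nat.sub_self, g_diag]
      · have hlt : k + 1 ≤ n := by omega
        have hT : T (n + 1) (k + 1) = T n (k + 1) + T n k := by
          rw [T]
          simp [Nat.not_lt.mpr (by omega : k + 1 ≤ n + 1), hd]
          exact fun h => absurd h (by omega)
        rw [hT, ih (k + 1) hlt, ih k (by omega)]
        have e1 : n - (k + 1) + 1 = n - k := by omega
        have e2 : n + 1 - (k + 1) = (n - (k + 1)) + 1 := by omega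
        rw [e2, g_rec, e1]

theorem stmt17 (n k : ℕ) (hkn : k ≤ n) :
    T n k = ∑ b ∈ Finset.Icc (k - n / 2) (k / 2),
      Nat.choose (n - k + b) (k - b) * Nat.choose (k - b) b := by
  rw [T_eq_g n k hkn]
  have hsub : Finset.Icc (k - n / 2) (k / 2) ⊆ Finset.range (k + 1) := by
    intro b hb
    simp only [Finset.mem_Icc] at hb
    simp only [Finset.mem_range]
    omega
  have hzero : ∀ b ∈ Finset.range (k + 1), b ∉ Finset.Icc (k - n / 2) (k / 2) →
      Nat.choose (n - k + b) (k - b) * Nat.choose (k - b) b = 0 := by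
    intro b hb hnb
    simp only [Finset.mem_range] at hb
    simp only [Finset.mem_Icc, not_and_or, not_le] at hnb
    rcases hnb with h | h
    · rw [Nat.choose_eq_zero_of_lt (by omega : n - k + b < k - b), zero_mul]
    · rw [Nat.choose_eq_zero_of_lt (by omega : k - b < b), mul_zero]
  rw [Finset.sum_subset hsub hzero]
  rfl
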